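/- Let K be a field and x a unit in K with x² ≠ 1. Define the quantum integer [k] = (x^k - x^{-k})/(x - x^{-1}) for k ∈ ℕ. Then for all m, n ∈ ℕ, [m+1]·[n+1] = Σ [k+1], where the sum runs over k with |m-n| ≤ k ≤ m+n and k ≡ m+n (mod 2). -/

import Mathlib

/-- The quantum integer [k] = (x^k - x^{-k})/(x - x^{-1}). -/
def qint {K : Type*} [Field K] (x : K) (k : ℕ) : K :=
  (x ^ k - x⁻¹ ^ k) / (x - x⁻¹)

lemma qint_aux {K : Type*} [Field K] (x : K) (hx0 : x ≠ 0) (hd : x - x⁻¹ ≠ 0)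
    {m n : ℕ} (hmn : m ≤ n) :
    qint x (m + 1) * qint x (n + 1) =
      ∑ j ∈ Finset.range (m + 1), qint x (n - m + 2 * j + 1) := by
  have hxy : x * x⁻¹ = 1 := mul_inv_cancel₀ hx0
  unfold qint
  rw [div_mul_div_comm, ← Finset.sum_div, div_eq_div_iff (mul_ne_zero hd hd) hd]
  have tele : ∀ j : ℕ,
      (x ^ (n - m + 2 * j + 1) - x⁻¹ ^ (n - m + 2 * j + 1)) * (x - x⁻¹) =
        (x ^ (n - m + 2 * (j + 1)) + x⁻¹ ^ (n - m + 2 * (j + 1))) -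
          (x ^ (n - m + 2 * j) + x⁻¹ ^ (n - m + 2 * j)) := by
    intro j
    have e : n - m + 2 * (j + 1) = (n - m + 2 * j) + 2 := by omega
    rw [e]
    set k := n - m + 2 * j
    linear_combination (-(x ^ k) - x⁻¹ ^ k) * hxy
  have key : ∑ j ∈ Finset.range (m + 1),
      (x ^ (n - m + 2 * j + 1) - x⁻¹ ^ (n - m + 2 * j + 1)) * (x - x⁻¹) =
      (x ^ (n - m + 2 * (m + 1)) + x⁻¹ ^ (n - m + 2 * (m + 1))) -
        (x ^ (n - m + 2 * 0) + x⁻¹ ^ (n - m + 2 * 0)) := by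
    rw [Finset.sum_congr rfl (fun j _ => tele j)]
    exact Finset.sum_range_sub (fun j => x ^ (n - m + 2 * j) + x⁻¹ ^ (n - m + 2 * j)) (m + 1)
  calc (x ^ (m + 1) - x⁻¹ ^ (m + 1)) * (x ^ (n + 1) - x⁻¹ ^ (n + 1)) * (x - x⁻¹)
      = (∑ j ∈ Finset.range (m + 1),
          (x ^ (n - m + 2 * j + 1) - x⁻¹ ^ (n - m + 2 * j + 1)) * (x - x⁻¹)) * (x - x⁻¹) := by
        rw [key]
        have e1 : x ^ (n + 1) = x ^ (n - m) * x ^ (m + 1) := by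
          rw [← pow_add]; congr 1; omega
        have e2 : x⁻¹ ^ (n + 1) = x⁻¹ ^ (n - m) * x⁻¹ ^ (m + 1) := by
          rw [← pow_add]; congr 1; omega
        have e3 : x ^ (n - m + 2 * (m + 1)) = x ^ (n - m) * x ^ (m + 1) * x ^ (m + 1) := by
          rw [← pow_add, ← pow_add]; congr 1; omega
        have e4 : x⁻¹ ^ (n - m + 2 * (m + 1)) = x⁻¹ ^ (n - m) * x⁻¹ ^ (m + 1) * x⁻¹ ^ (m + 1) := by
          rw [← pow_add, ← pow_add]; congr 1; omega
        have e5 : n - m + 2 * 0 = n - m := by omega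
        have hab : x ^ (m + 1) * x⁻¹ ^ (m + 1) = 1 := by
          rw [← mul_pow, hxy, one_pow]
        rw [e1, e2, e3, e4, e5]
        linear_combination (x - x⁻¹) * (-(x ^ (n - m)) - x⁻¹ ^ (n - m)) * hab
    _ = (∑ j ∈ Finset.range (m + 1),
          (x ^ (n - m + 2 * j + 1) - x⁻¹ ^ (n - m + 2 * j + 1))) * ((x - x⁻¹) * (x - x⁻¹)) := by
        rw [← Finset.sum_mul]; ring

lemma filt_eq (a b : ℕ) (h : a ≤ b) :
    (Finset.Icc (b - a) (a + b)).filter (fun k => k % 2 = (a + b) % 2) =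
      (Finset.range (a + 1)).image (fun j => b - a + 2 * j) := by
  ext k
  simp only [Finset.mem_filter, Finset.mem_Icc, Finset.mem_image, Finset.mem_range]
  constructor
  · rintro ⟨⟨h1, h2⟩, h3⟩
    exact ⟨(k - (b - a)) / 2, by omega, by omega⟩
  · rintro ⟨j, hj, rfl⟩
    omega

theorem stmt_12 {K : Type*} [Field K] (x : K) (hx : IsUnit x) (hx2 : x ^ 2 ≠ 1)
    (m n : ℕ) :
    qint x (m + 1) * qint x (n + 1) =
      ∑ k ∈ (Finset.Icc (max m n - min m n) (m + n)).filter
        (fun k => k % 2 = (m + n) % 2), qint x (k + 1) := by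
  have hx0 : x ≠ 0 := hx.ne_zero
  have hd : x - x⁻¹ ≠ 0 := by
    intro h
    apply hx2
    have hxx : x = x⁻¹ := by rwa [sub_eq_zero] at h
    rw [sq]
    nth_rewrite 2 [hxx]
    exact mul_inv_cancel₀ hx0
  rcases le_total m n with h | h
  · rw [max_eq_right h, min_eq_left h, filt_eq m n h,
      Finset.sum_image (by intro a _ b _ hab; simp only at hab; omega)]
    exact qint_aux x hx0 hd h
  · rw [max_eq_left h, min_eq_right h, mul_comm, Nat.add_comm m n, filt_eq n m h,
      Finset.sum_image (by intro a _ b _ hab; simp only at hab; omega)]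
    exact qint_aux x hx0 hd h
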